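/- Let S be a unique factorization domain and f ∈ S an irreducible element. Then any two nonzero S-submodules M, N of the module S_f/S (the localization of S at f modulo S) have nonzero intersection. -/
import Mathlib

/-- The `R`-module `R_f / R`. -/
noncomputable abbrev QuotMod {R : Type*} [CommRing R] (f : R) :=
  (Localization.Away f) ⧸ (LinearMap.range (Algebra.linearMap R (Localization.Away f)))

/-- The `R`-linear map `R → R_f/R`, `a ↦ [a/f]`. -/
noncomputable def iota {R : Type*} [CommRing R] (f : R) : R →ₗ[R] QuotMod f :=
  (Submodule.mkQ _).comp
    (((LinearMap.mul R (Localization.Away f)) (IsLocalization.Away.invSelf f)).comp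
      (Algebra.linearMap R (Localization.Away f)))

section Aux
variable {S : Type*} [CommRing S] [IsDomain S] (f : S)

local notation "L" => Localization.Away f
local notation "π" => Submodule.mkQ (LinearMap.range (Algebra.linearMap S L))

omit [IsDomain S] in
lemma iota_apply (c : S) :
    iota f c = Submodule.mkQ _ (IsLocalization.Away.invSelf f * algebraMap S L c) := rfl

lemma algMap_inj (hf0 : f ≠ 0) : Function.Injective (algebraMap S L) :=
  IsLocalization.injective _ (powers_le_nonZeroDivisors_of_noZeroDivisors hf0)

lemma iota_eq_zero_iff (hf0 : f ≠ 0) (c : S) : iota f c = 0 ↔ f ∣ c := by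
  rw [iota_apply, Submodule.mkQ_apply, Submodule.Quotient.mk_eq_zero]
  have h1 : algebraMap S L f * IsLocalization.Away.invSelf f = 1 :=
    IsLocalization.Away.mul_invSelf f
  constructor
  · rintro ⟨s, hs⟩
    simp only [Algebra.linearMap_apply] at hs
    refine ⟨s, algMap_inj f hf0 ?_⟩
    rw [map_mul]
    have hc : algebraMap S L c = algebraMap S L f * algebraMap S L s := by
      calc algebraMap S L c
          = (algebraMap S L f * IsLocalization.Away.invSelf f) * algebraMap S L c := by
            rw [h1, one_mul]
        _ = algebraMap S L f * (IsLocalization.Away.invSelf f * algebraMap S L c) := by ring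
        _ = algebraMap S L f * algebraMap S L s := by rw [← hs]
    rw [hc, mul_comm]
  · rintro ⟨d, rfl⟩
    refine ⟨d, ?_⟩
    simp only [Algebra.linearMap_apply]
    refine Eq.symm ?_
    calc IsLocalization.Away.invSelf f * algebraMap S L (f * d)
        = (algebraMap S L f * IsLocalization.Away.invSelf f) * algebraMap S L d := by
          rw [map_mul]; ring
      _ = algebraMap S L d := by rw [h1, one_mul]

lemma exists_iota_mem [UniqueFactorizationMonoid S] (hf : Irreducible f)
    (M : Submodule S (QuotMod f)) (hM : M ≠ ⊥) :
    ∃ a : S, ¬ f ∣ a ∧ iota f a ∈ M := by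
  have hf0 : f ≠ 0 := hf.ne_zero
  obtain ⟨x, hxM, hx0⟩ := Submodule.exists_mem_ne_zero_of_ne_bot hM
  obtain ⟨y, rfl⟩ := Submodule.mkQ_surjective _ x
  obtain ⟨⟨a, s⟩, h⟩ := IsLocalization.surj (Submonoid.powers f) y
  obtain ⟨n, hn⟩ := s.2
  simp only at h
  rw [← hn] at h
  have hinv0 : algebraMap S L (f ^ n) * (IsLocalization.Away.invSelf f) ^ n = 1 := by
    rw [map_pow, ← mul_pow, IsLocalization.Away.mul_invSelf, one_pow]
  have ha0 : a ≠ 0 := by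
    rintro rfl
    apply hx0
    have hy0 : y = 0 := by
      rw [map_zero] at h
      calc y = y * (algebraMap S L (f ^ n) * (IsLocalization.Away.invSelf f) ^ n) := by
              rw [hinv0, mul_one]
        _ = (y * algebraMap S L (f ^ n)) * (IsLocalization.Away.invSelf f) ^ n := by ring
        _ = 0 := by rw [show y * algebraMap S L (f ^ n) = 0 from h, zero_mul]
    simp [hy0]
  obtain ⟨k, a', ha', rfl⟩ := WfDvdMonoid.max_power_factor ha0 hf
  -- y = algebraMap (f^k * a') * invSelf^n
  have hinv : algebraMap S L (f ^ n) * (IsLocalization.Away.invSelf f) ^ n = 1 := by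
    rw [map_pow, ← mul_pow, IsLocalization.Away.mul_invSelf, one_pow]
  have hy : y = algebraMap S L (f ^ k * a') * (IsLocalization.Away.invSelf f) ^ n := by
    calc y = y * (algebraMap S L (f ^ n) * (IsLocalization.Away.invSelf f) ^ n) := by
            rw [hinv, mul_one]
      _ = algebraMap S L (f ^ k * a') * (IsLocalization.Away.invSelf f) ^ n := by
            rw [← mul_assoc, h]
  rcases le_or_gt n k with hnk | hkn
  · exfalso
    apply hx0
    rw [Submodule.mkQ_apply, Submodule.Quotient.mk_eq_zero]
    refine ⟨f ^ (k - n) * a', ?_⟩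
    simp only [Algebra.linearMap_apply]
    rw [hy]
    have hk : (f : S) ^ k = f ^ (k - n) * f ^ n := by rw [← pow_add]; congr 1; omega
    rw [hk]
    calc algebraMap S L (f ^ (k - n) * a')
        = algebraMap S L (f ^ (k - n) * a') * (algebraMap S L (f ^ n) * (IsLocalization.Away.invSelf f) ^ n) := by
          rw [hinv, mul_one]
      _ = algebraMap S L (f ^ (k - n) * f ^ n * a') * (IsLocalization.Away.invSelf f) ^ n := by
          rw [map_mul, map_mul, map_mul]; ring
  · refine ⟨a', ha', ?_⟩
    have key : iota f a' = f ^ (n - k - 1) • Submodule.mkQ _ y := by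
      rw [iota_apply, ← map_smul]
      congr 1
      rw [hy]
      have hsmul : (f ^ (n - k - 1) : S) • (algebraMap S L (f ^ k * a') * (IsLocalization.Away.invSelf f) ^ n)
          = algebraMap S L (f ^ (n-k-1)) * (algebraMap S L (f ^ k * a') * (IsLocalization.Away.invSelf f) ^ n) := by
        rw [Algebra.smul_def]
      rw [hsmul]
      have hn : n = (n - k - 1) + k + 1 := by omega
      have : ((IsLocalization.Away.invSelf f : L)) ^ n
          = (IsLocalization.Away.invSelf f : L) ^ (n - k - 1) * (IsLocalization.Away.invSelf f) ^ k * IsLocalization.Away.invSelf f := by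
        conv_lhs => rw [show n = (n - k - 1) + k + 1 by omega]
        rw [pow_succ, pow_add]
      rw [this, map_mul, map_pow, map_pow]
      refine Eq.symm ?_
      have h1 : algebraMap S L f * IsLocalization.Away.invSelf f = 1 :=
        IsLocalization.Away.mul_invSelf f
      have h2 : (algebraMap S L f) ^ (n-k-1) * (IsLocalization.Away.invSelf f) ^ (n-k-1) = 1 := by
        rw [← mul_pow, h1, one_pow]
      have h3 : (algebraMap S L f) ^ k * (IsLocalization.Away.invSelf f) ^ k = 1 := by
        rw [← mul_pow, h1, one_pow]
      calc (algebraMap S L f) ^ (n-k-1) * ((algebraMap S L f) ^ k * algebraMap S L a' *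
              ((IsLocalization.Away.invSelf f) ^ (n - k - 1) * (IsLocalization.Away.invSelf f) ^ k * IsLocalization.Away.invSelf f))
          = (IsLocalization.Away.invSelf f * algebraMap S L a') *
              (((algebraMap S L f) ^ (n-k-1) * (IsLocalization.Away.invSelf f) ^ (n-k-1)) *
               ((algebraMap S L f) ^ k * (IsLocalization.Away.invSelf f) ^ k)) := by ring
        _ = IsLocalization.Away.invSelf f * algebraMap S L a' := by rw [h2, h3, mul_one, mul_one]
    rw [key]
    exact Submodule.smul_mem _ _ hxM

end Aux

/-- Any two nonzero submodules of `S_f/S` over a UFD `S` with `f` irreducible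
have nonzero intersection. -/
theorem stmt0 {S : Type*} [CommRing S] [IsDomain S] [UniqueFactorizationMonoid S]
    (f : S) (hf : Irreducible f)
    (M N : Submodule S (QuotMod f)) (hM : M ≠ ⊥) (hN : N ≠ ⊥) :
    M ⊓ N ≠ ⊥ := by
  obtain ⟨a, ha, haM⟩ := exists_iota_mem f hf M hM
  obtain ⟨b, hb, hbN⟩ := exists_iota_mem f hf N hN
  have h1 : iota f (a * b) ∈ M := by
    rw [mul_comm a b, ← smul_eq_mul, map_smul]
    exact Submodule.smul_mem _ _ haM
  have h2 : iota f (a * b) ∈ N := by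
    rw [← smul_eq_mul, map_smul]
    exact Submodule.smul_mem _ _ hbN
  intro hbot
  have : iota f (a * b) = 0 := by
    have : iota f (a * b) ∈ M ⊓ N := ⟨h1, h2⟩
    rwa [hbot, Submodule.mem_bot] at this
  rcases (iota_eq_zero_iff f hf.ne_zero _).mp this with hd
  rcases hf.prime.2.2 a b hd with h | h
  · exact ha h
  · exact hb h
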